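/- Let A, B, C, τ₁, τ₂ be real numbers with C ≠ 0, and let ω > 0 satisfy (iω)² + A(iω) + B(iω)e^{−iωτ₁} + C e^{−iωτ₂} = 0. Then ω⁴ + (A² + B²)ω² − C² − 2Bω³·sin(ωτ₁) + 2ABω²·cos(ωτ₁) = 0 and cos(ωτ₂) = (ω² − Bω·sin(ωτ₁))/C. -/

import Mathlib

/-- Eliminating τ₂ from a purely imaginary root of the two-delay characteristic
equation (Case V) yields the stated equation and cos(ωτ₂) = (ω² − Bω sin(ωτ₁))/C. -/
theorem stmt_18 (A B C τ₁ τ₂ ω : ℝ) (hC : C ≠ 0) (hω : 0 < ω)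
    (heq : (Complex.I * (ω : ℂ)) ^ 2 + (A : ℂ) * (Complex.I * (ω : ℂ)) +
        (B : ℂ) * (Complex.I * (ω : ℂ)) * Complex.exp (-(Complex.I * (ω : ℂ)) * (τ₁ : ℂ)) +
        (C : ℂ) * Complex.exp (-(Complex.I * (ω : ℂ)) * (τ₂ : ℂ)) = 0) :
    ω ^ 4 + (A ^ 2 + B ^ 2) * ω ^ 2 - C ^ 2 - 2 * B * ω ^ 3 * Real.sin (ω * τ₁) +
      2 * A * B * ω ^ 2 * Real.cos (ω * τ₁) = 0 ∧
    Real.cos (ω * τ₂) = (ω ^ 2 - B * ω * Real.sin (ω * τ₁)) / C := by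
  have e1 := congrArg Complex.re heq
  have e2 := congrArg Complex.im heq
  simp [Complex.exp_re, Complex.exp_im, Complex.ext_iff, Real.cos_neg, Real.sin_neg,
    mul_pow, Complex.I_sq, ← Complex.ofReal_pow, mul_comm] at e1 e2
  rw [mul_comm ω τ₁, mul_comm ω τ₂]
  constructor
  · linear_combination
      (-2*(ω^2 - B*ω*Real.sin (τ₁*ω)) - (-ω^2 + B*ω*Real.sin (τ₁*ω) + C*Real.cos (τ₂*ω))) * e1 +
      (2*(A*ω + B*ω*Real.cos (τ₁*ω)) - (A*ω + B*ω*Real.cos (τ₁*ω) - C*Real.sin (τ₂*ω))) * e2 +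
      C^2 * Real.sin_sq_add_cos_sq (τ₂*ω) - B^2*ω^2 * Real.sin_sq_add_cos_sq (τ₁*ω)
  · field_simp
    rw [mul_comm ω τ₁]
    linarith [e1]
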